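/- arXiv:2112.02705 — 5 statements merged into one kernel-verified Lean document; each statement's English description precedes it below -/
import Mathlib

section
/- Let X_S' ⊆ X be any under-approximation of the stable part of the feature space, i.e., X_S' ⊆ {x ∈ X : g is stable on x}. Then: (i) for every x ∈ X, if g is robust on x and N(x) ⊆ X_S', then g is resilient on x; and consequently (ii) for every nonempty finite test set D, the estimate R̂(g,D) = |{x ∈ D : N(x) ⊆ X_S' ∧ g is robust on x}| / |D| satisfies R̂(g,D) ≤ R(g,D). -/
open Classical

/-- The classifier `g` is stable on `x` w.r.t. attacker `A`. -/
def Stable {d : ℕ} {Y : Type*} (g : (Fin d → ℝ) → Y)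
    (A : (Fin d → ℝ) → Set (Fin d → ℝ)) (x : Fin d → ℝ) : Prop :=
  ∀ z ∈ A x, g z = g x

/-- The classifier `g` is robust on `x` w.r.t. target `f` and attacker `A`. -/
def Robust {d : ℕ} {Y : Type*} (g f : (Fin d → ℝ) → Y)
    (A : (Fin d → ℝ) → Set (Fin d → ℝ)) (x : Fin d → ℝ) : Prop :=
  g x = f x ∧ Stable g A x

/-- The classifier `g` is resilient on `x` w.r.t. target `f`, attacker `A` and
neighborhood function `N`. -/
def Resilient {d : ℕ} {Y : Type*} (g f : (Fin d → ℝ) → Y)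
    (A N : (Fin d → ℝ) → Set (Fin d → ℝ)) (x : Fin d → ℝ) : Prop :=
  Robust g f A x ∧ ∀ z ∈ N x, Stable g A z

/-- Resilience of `g` w.r.t. target `f`, attacker `A` and neighborhood `N` on test set `D`. -/
noncomputable def resilience {d : ℕ} {Y : Type*} (g f : (Fin d → ℝ) → Y)
    (A N : (Fin d → ℝ) → Set (Fin d → ℝ)) (D : Finset (Fin d → ℝ)) : ℚ :=
  ((D.filter (fun x => Resilient g f A N x)).card : ℚ) / (D.card : ℚ)

/-- The resilience estimate `R̂` computed from an under-approximation `XS'`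
of the stable part of the feature space. -/
noncomputable def resilienceEstimate {d : ℕ} {Y : Type*} (g f : (Fin d → ℝ) → Y)
    (A N : (Fin d → ℝ) → Set (Fin d → ℝ)) (XS' : Set (Fin d → ℝ))
    (D : Finset (Fin d → ℝ)) : ℚ :=
  ((D.filter (fun x => N x ⊆ XS' ∧ Robust g f A x)).card : ℚ) / (D.card : ℚ)

/-- If `XS'` under-approximates the stable part of the feature space, then (i) every
robust instance whose neighborhood is included in `XS'` is resilient, and (ii) the
resilience estimate `R̂` is a lower bound to resilience on every nonempty finite test set. -/
theorem resilienceEstimate_le_resilience {d : ℕ} {Y : Type*} [Fintype Y]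
    (g f : (Fin d → ℝ) → Y) (A N : (Fin d → ℝ) → Set (Fin d → ℝ))
    (XS' : Set (Fin d → ℝ)) (hXS' : XS' ⊆ {x | Stable g A x}) :
    (∀ x : Fin d → ℝ, Robust g f A x → N x ⊆ XS' → Resilient g f A N x) ∧
    ∀ D : Finset (Fin d → ℝ), D.Nonempty →
      resilienceEstimate g f A N XS' D ≤ resilience g f A N D := by
  constructor
  · intro x hr hN
    exact ⟨hr, fun z hz => hXS' (hN hz)⟩
  · intro D hD
    unfold resilienceEstimate resilience
    have hpos : (0:ℚ) < D.card := by exact_mod_cast Finset.card_pos.mpr hD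
    apply div_le_div_of_nonneg_right _ hpos.le
    have : (D.filter (fun x => N x ⊆ XS' ∧ Robust g f A x)) ⊆
        (D.filter (fun x => Resilient g f A N x)) := by
      intro x hx
      simp only [Finset.mem_filter] at hx ⊢
      exact ⟨hx.1, ⟨hx.2.2, fun z hz => hXS' (hx.2.1 hz)⟩⟩
    exact_mod_cast Finset.card_le_card this
end

section
/- Let T = {t_1,…,t_n} be an ensemble of decision trees whose majority-voting prediction is T(x) = y if strictly more than n/2 trees satisfy t_i(x) = y (and a fixed default label otherwise), and whose prediction over a hyper-rectangle H is T(H) = {y} if |{i : t_i(H) = {y}}| > n/2 and T(H) = Y otherwise. Assuming each per-tree prediction over hyper-rectangles is sound, i.e., {y : ∃ x ∈ H, t_i(x) = y} ⊆ t_i(H) for all i and H, the ensemble prediction over hyper-rectangles is sound: {y ∈ Y : ∃ x ∈ H, T(x) = y} ⊆ T(H). -/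
open Classical

/-- Binary decision trees over `ℝ^d` with labels in `Y`. -/
inductive DTree (d : ℕ) (Y : Type*) where
  | leaf (y : Y)
  | node (f : Fin d) (v : ℝ) (l r : DTree d Y)

/-- Prediction of a decision tree on an instance. -/
noncomputable def DTree.eval {d : ℕ} {Y : Type*} : DTree d Y → (Fin d → ℝ) → Y
  | .leaf y, _ => y
  | .node f v l r, x => if x f ≤ v then l.eval x else r.eval x

/-- The set of instances of a hyper-rectangle `H = ⟨I_1,…,I_d⟩` (componentwise membership). -/
def box {d : ℕ} (H : Fin d → Set ℝ) : Set (Fin d → ℝ) :=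
  {x | ∀ i, x i ∈ H i}

/-- The recursively defined set of predictions of a decision tree over a hyper-rectangle. -/
noncomputable def DTree.evalBox {d : ℕ} {Y : Type*} : DTree d Y → (Fin d → Set ℝ) → Set Y
  | .leaf y, _ => {y}
  | .node f v l r, H =>
      if H f ∩ Set.Ioi v = ∅ then l.evalBox H
      else if H f ∩ Set.Iic v = ∅ then r.evalBox H
      else l.evalBox H ∪ r.evalBox H

/-- Majority-voting ensemble prediction on an instance: `y` if strictly more than `n/2`
trees predict `y`, a fixed default label `y0` otherwise. -/
noncomputable def ensembleEval {d n : ℕ} {Y : Type*} (T : Fin n → DTree d Y) (y0 : Y)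
    (x : Fin d → ℝ) : Y :=
  if h : ∃ y : Y, 2 * (Finset.univ.filter (fun i => (T i).eval x = y)).card > n then
    h.choose
  else y0

/-- Majority-voting ensemble prediction over a hyper-rectangle: `{y}` if strictly more
than `n/2` trees have `t_i(H) = {y}`, and the whole label set `Y` otherwise. -/
noncomputable def ensembleEvalBox {d n : ℕ} {Y : Type*} (T : Fin n → DTree d Y)
    (H : Fin d → Set ℝ) : Set Y :=
  if h : ∃ y : Y, 2 * (Finset.univ.filter (fun i => (T i).evalBox H = {y})).card > n then
    {h.choose}
  else Set.univ


lemma maj_overlap {n : ℕ} (P Q : Fin n → Prop)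
    (hP : 2 * (Finset.univ.filter (fun i => P i)).card > n)
    (hQ : 2 * (Finset.univ.filter (fun i => Q i)).card > n) :
    ∃ i, P i ∧ Q i := by
  by_contra hcon
  push_neg at hcon
  have hdisj : Disjoint (Finset.univ.filter (fun i => P i))
      (Finset.univ.filter (fun i => Q i)) := by
    rw [Finset.disjoint_filter]
    intro i _ hPi hQi
    exact hcon i hPi hQi
  have h1 : (Finset.univ.filter (fun i => P i)).card
      + (Finset.univ.filter (fun i => Q i)).card
      = ((Finset.univ.filter (fun i => P i)) ∪ (Finset.univ.filter (fun i => Q i))).card :=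
    (Finset.card_union_of_disjoint hdisj).symm
  have h2 : ((Finset.univ.filter (fun i => P i)) ∪ (Finset.univ.filter (fun i => Q i))).card
      ≤ n := by
    simpa using Finset.card_le_univ ((Finset.univ.filter (fun i => P i)) ∪ (Finset.univ.filter (fun i => Q i)))
  omega

/-- Soundness of the ensemble prediction over hyper-rectangles: assuming each per-tree
prediction over hyper-rectangles is sound, the set `T(H)` over-approximates the set of
ensemble predictions reachable from instances of `H`. -/
theorem ensembleEvalBox_sound {d n : ℕ} {Y : Type*} [Fintype Y]
    (T : Fin n → DTree d Y) (y0 : Y)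
    (hsound : ∀ (i : Fin n) (H : Fin d → Set ℝ),
      {y : Y | ∃ x ∈ box H, (T i).eval x = y} ⊆ (T i).evalBox H)
    (H : Fin d → Set ℝ) :
    {y : Y | ∃ x ∈ box H, ensembleEval T y0 x = y} ⊆ ensembleEvalBox T H := by
  intro y hy
  obtain ⟨x, hx, hex⟩ := hy
  unfold ensembleEvalBox
  split
  case isFalse => exact Set.mem_univ y
  case isTrue h =>
    have hy1 := h.choose_spec
    set y1 := h.choose with hy1def
    -- every tree with evalBox H = {y1} predicts y1 at x
    have hsub : (Finset.univ.filter (fun i => (T i).evalBox H = {y1}))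
        ⊆ (Finset.univ.filter (fun i => (T i).eval x = y1)) := by
      intro i hi
      simp only [Finset.mem_filter, Finset.mem_univ, true_and] at hi ⊢
      have := hsound i H (show (T i).eval x ∈ {y : Y | ∃ x ∈ box H, (T i).eval x = y}
        from ⟨x, hx, rfl⟩)
      rw [hi] at this
      exact this
    have hmaj : 2 * (Finset.univ.filter (fun i => (T i).eval x = y1)).card > n :=
      lt_of_lt_of_le hy1 (by
        exact Nat.mul_le_mul_left 2 (Finset.card_le_card hsub))
    have hex2 : ∃ y : Y, 2 * (Finset.univ.filter (fun i => (T i).eval x = y)).card > n :=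
      ⟨y1, hmaj⟩
    have heval : ensembleEval T y0 x = hex2.choose := by
      unfold ensembleEval
      rw [dif_pos hex2]
    have hy2 := hex2.choose_spec
    obtain ⟨i, hPi, hQi⟩ := maj_overlap (fun i => (T i).eval x = hex2.choose)
      (fun i => (T i).eval x = y1) hy2 hmaj
    have : hex2.choose = y1 := hPi ▸ hQi
    have : y = y1 := by rw [← hex, heval, this]
    simp [this]
end

section
/- Soundness of Tree Annotation (Lemma 1): for every decision tree t over ℝ^d and every set of symbolic attacks S, if the root of t is well-annotated by S, then the call Annotate(t, S) returns a well-annotated decision tree, i.e., every node of the resulting tree is well-annotated by the set of symbolic attacks stored in its sym attribute. -/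
open Classical

/-- Annotated decision trees: each node carries a `sym` attribute,
i.e., a set of symbolic attacks. -/
inductive ATree (d : ℕ) (Y : Type*) (σ : Type*) where
  | leaf (y : Y) (sym : σ)
  | node (f : Fin d) (v : ℝ) (sym : σ) (l r : ATree d Y σ)

/-- A symbolic attack: a pre-image hyper-rectangle, a post-image hyper-rectangle
(each represented as a `d`-vector of sets of reals, the intervals) and a cost. -/
structure SymAtk (d : ℕ) where
  pre : Fin d → Set ℝ
  post : Fin d → Set ℝ
  cost : ℕ

/-- The set of adversarial manipulations of `x` in the cost/budget threat model with
per-feature costs `c`, per-feature perturbation intervals `Iatk` and budget `b`. -/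
def Adv {d : ℕ} (c : Fin d → ℕ) (Iatk : Fin d → Set ℝ) (b : ℕ)
    (x : Fin d → ℝ) : Set (Fin d → ℝ) :=
  {z | ∃ F : Finset (Fin d),
    (∀ f ∈ F, ∃ δ ∈ Iatk f, z f = x f + δ) ∧
    (∀ f ∉ F, z f = x f) ∧
    (∑ f ∈ F, c f) ≤ b}

/-- `RefineLeft s f v`: refinement of the symbolic attack `s` for the left sub-tree of a
node testing feature `f` against threshold `v`, with attack intervals `[δl f, δr f]`,
costs `c` and budget `b`. -/
noncomputable def RefineLeft {d : ℕ} (c : Fin d → ℕ) (δl δr : Fin d → ℝ) (b : ℕ)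
    (s : SymAtk d) (f : Fin d) (v : ℝ) : Set (SymAtk d) :=
  (if s.post f ∩ Set.Iic v ≠ ∅ then
    {⟨Function.update s.pre f
        (if s.pre f = s.post f then s.pre f ∩ Set.Iic v
         else s.pre f ∩ Set.Iic (v - min 0 (δl f))),
      Function.update s.post f (s.post f ∩ Set.Iic v),
      s.cost⟩}
   else ∅)
  ∪
  (if s.pre f = s.post f ∧ δl f < 0 ∧ s.pre f ∩ Set.Ioc v (v - δl f) ≠ ∅ ∧
      s.cost + c f ≤ b then
    {⟨Function.update s.pre f (s.pre f ∩ Set.Ioc v (v - δl f)),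
      Function.update s.post f (s.post f ∩ Set.Ioc (v + δl f) v),
      s.cost + c f⟩}
   else ∅)

/-- `RefineRight s f v`: refinement of the symbolic attack `s` for the right sub-tree. -/
noncomputable def RefineRight {d : ℕ} (c : Fin d → ℕ) (δl δr : Fin d → ℝ) (b : ℕ)
    (s : SymAtk d) (f : Fin d) (v : ℝ) : Set (SymAtk d) :=
  (if s.post f ∩ Set.Ioi v ≠ ∅ then
    {⟨Function.update s.pre f
        (if s.pre f = s.post f then s.pre f ∩ Set.Ioi v
         else s.pre f ∩ Set.Ioi (v - max 0 (δr f))),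
      Function.update s.post f (s.post f ∩ Set.Ioi v),
      s.cost⟩}
   else ∅)
  ∪
  (if s.pre f = s.post f ∧ δr f > 0 ∧ s.pre f ∩ Set.Ioc (v - δr f) v ≠ ∅ ∧
      s.cost + c f ≤ b then
    {⟨Function.update s.pre f (s.pre f ∩ Set.Ioc (v - δr f) v),
      Function.update s.post f (s.post f ∩ Set.Ioc v (v + δr f)),
      s.cost + c f⟩}
   else ∅)

/-- `Annotate t S` stores `S` at the root of `t` and recursively annotates the left and
right sub-trees with the refinements of the symbolic attacks in `S`. -/
noncomputable def Annotate {d : ℕ} {Y : Type*} (c : Fin d → ℕ) (δl δr : Fin d → ℝ)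
    (b : ℕ) : DTree d Y → Set (SymAtk d) → ATree d Y (Set (SymAtk d))
  | .leaf y, S => .leaf y S
  | .node f v l r, S =>
      .node f v S
        (Annotate c δl δr b l (⋃ s ∈ S, RefineLeft c δl δr b s f v))
        (Annotate c δl δr b r (⋃ s ∈ S, RefineRight c δl δr b s f v))

/-- `ReachesD t z p`: the node of `t` identified by the root-path `p`
(`false` = left child, `true` = right child) is traversed in the prediction `t(z)`. -/
def ReachesD {d : ℕ} {Y : Type*} : DTree d Y → (Fin d → ℝ) → List Bool → Prop
  | _, _, [] => True
  | .leaf _, _, _ :: _ => False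
  | .node f v l _, z, false :: p => z f ≤ v ∧ ReachesD l z p
  | .node f v _ r, z, true :: p => v < z f ∧ ReachesD r z p

/-- The `sym` annotation stored at the node of an annotated tree identified by path `p`
(`none` if no such node exists). -/
def ATree.symAt {d : ℕ} {Y : Type*} {σ : Type*} :
    ATree d Y σ → List Bool → Option σ
  | .leaf _ S, [] => some S
  | .node _ _ S _ _, [] => some S
  | .leaf _ _, _ :: _ => none
  | .node _ _ _ l _, false :: p => l.symAt p
  | .node _ _ _ _ r, true :: p => r.symAt p

/-- The minimum cost the attacker (with costs `c` and intervals `Iatk`) must pay to make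
the instance `x` traverse the node of `t` identified by path `p`. -/
noncomputable def minCost {d : ℕ} {Y : Type*} (c : Fin d → ℕ) (Iatk : Fin d → Set ℝ)
    (t : DTree d Y) (x : Fin d → ℝ) (p : List Bool) : ℕ :=
  sInf {k : ℕ | ∃ w ∈ Adv c Iatk k x, ReachesD t w p}

/-- The node of `t` identified by path `p` is well-annotated by the set `S` of symbolic
attacks: for every instance `x` and every adversarial manipulation `z ∈ A(x)` traversing
the node, `S` contains a symbolic attack `s` with `x ∈ s.pre`, `z ∈ s.post`, and `s.cost`
equal to the minimum cost to pay to make `x` traverse the node. -/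
def NodeWellAnnotated {d : ℕ} {Y : Type*} (c : Fin d → ℕ) (Iatk : Fin d → Set ℝ)
    (b : ℕ) (t : DTree d Y) (p : List Bool) (S : Set (SymAtk d)) : Prop :=
  ∀ x z, z ∈ Adv c Iatk b x → ReachesD t z p →
    ∃ s ∈ S, x ∈ box s.pre ∧ z ∈ box s.post ∧ s.cost = minCost c Iatk t x p

section Soundness

variable {d : ℕ} {Y : Type*}

private lemma mem_update_box_iff (B : Fin d → Set ℝ) (f : Fin d) (P : Set ℝ)
    (w : Fin d → ℝ) :
    (∀ g, w g ∈ Function.update B f (B f ∩ P) g) ↔ ((∀ g, w g ∈ B g) ∧ w f ∈ P) := by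
  constructor
  · intro h
    have hf := h f
    rw [Function.update_self] at hf
    refine ⟨fun g => ?_, hf.2⟩
    by_cases hg : g = f
    · rw [hg]; exact hf.1
    · have := h g; rwa [Function.update_of_ne hg] at this
  · rintro ⟨h1, h2⟩ g
    by_cases hg : g = f
    · rw [hg, Function.update_self]; exact ⟨h1 f, h2⟩
    · rw [Function.update_of_ne hg]; exact h1 g

/-- Strengthened invariant carried through the annotation process, relative to a
constraint box `B` describing the region of the current node. -/
def GoodB (c : Fin d → ℕ) (δl δr : Fin d → ℝ) (b : ℕ) (B : Fin d → Set ℝ)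
    (S : Set (SymAtk d)) : Prop :=
  ∀ x z : Fin d → ℝ, z ∈ Adv c (fun f => Set.Icc (δl f) (δr f)) b x →
    (∀ g, z g ∈ B g) →
    ∃ s ∈ S, x ∈ box s.pre ∧ z ∈ box s.post ∧
      ∃ D F : Finset (Fin d), D ⊆ F ∧
        (∀ g ∈ F, ∃ δ ∈ Set.Icc (δl g) (δr g), z g = x g + δ) ∧
        (∀ g ∉ F, z g = x g) ∧
        (∑ g ∈ F, c g) ≤ b ∧
        (∀ g ∉ D, s.pre g = s.post g) ∧
        (∀ g ∈ D, x g ∉ B g) ∧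
        (∀ g, s.post g ⊆ B g) ∧
        s.cost = ∑ g ∈ D, c g

private lemma step_left (c : Fin d → ℕ) (δl δr : Fin d → ℝ) (b : ℕ)
    (B : Fin d → Set ℝ) (S : Set (SymAtk d)) (f : Fin d) (v : ℝ)
    (h : GoodB c δl δr b B S) :
    GoodB c δl δr b (Function.update B f (B f ∩ Set.Iic v))
      (⋃ s ∈ S, RefineLeft c δl δr b s f v) := by
  intro x z hz hzB'
  rw [mem_update_box_iff] at hzB'
  obtain ⟨hzB, hzf⟩ := hzB'
  obtain ⟨s, hsS, hxpre, hzpost, D, F, hDF, hF, hnF, hFb, hDpre, hDB, hpostB, hcost⟩ :=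
    h x z hz hzB
  have hzfv : z f ≤ v := hzf
  have hcond : s.post f ∩ Set.Iic v ≠ ∅ :=
    Set.Nonempty.ne_empty ⟨z f, hzpost f, hzf⟩
  by_cases hfD : f ∈ D
  · -- feature f already attacked: pre f ≠ post f
    have hne : s.pre f ≠ s.post f := fun he => hDB f hfD (hpostB f (he ▸ hxpre f))
    obtain ⟨δ, hδ, hzfx⟩ := hF f (hDF hfD)
    have hxf : x f ∈ Set.Iic (v - min 0 (δl f)) := by
      have h1 : min 0 (δl f) ≤ δ := le_trans (min_le_right _ _) hδ.1
      simp only [Set.mem_Iic]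
      linarith
    refine ⟨⟨Function.update s.pre f (s.pre f ∩ Set.Iic (v - min 0 (δl f))),
            Function.update s.post f (s.post f ∩ Set.Iic v), s.cost⟩,
      Set.mem_biUnion hsS ?_, ?_, ?_, D, F, hDF, hF, hnF, hFb, ?_, ?_, ?_, hcost⟩
    · apply Set.mem_union_left
      rw [if_pos hcond, if_neg hne]
      rfl
    · intro i; dsimp only
      by_cases hi : i = f
      · rw [hi, Function.update_self]; exact ⟨hxpre f, hxf⟩
      · rw [Function.update_of_ne hi]; exact hxpre i
    · intro i; dsimp only
      by_cases hi : i = f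
      · rw [hi, Function.update_self]; exact ⟨hzpost f, hzf⟩
      · rw [Function.update_of_ne hi]; exact hzpost i
    · intro g hg
      have hgf : g ≠ f := fun he => hg (he ▸ hfD)
      show Function.update s.pre f _ g = Function.update s.post f _ g
      rw [Function.update_of_ne hgf, Function.update_of_ne hgf]
      exact hDpre g hg
    · intro g hg
      by_cases hgf : g = f
      · rw [hgf, Function.update_self]
        exact fun hx => hDB f hfD hx.1
      · rw [Function.update_of_ne hgf]; exact hDB g hg
    · intro g
      by_cases hgf : g = f
      · show Function.update s.post f _ g ⊆ Function.update B f _ g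
        rw [hgf, Function.update_self, Function.update_self]
        exact fun u hu => ⟨hpostB f hu.1, hu.2⟩
      · show Function.update s.post f _ g ⊆ Function.update B f _ g
        rw [Function.update_of_ne hgf, Function.update_of_ne hgf]
        exact hpostB g
  · have hpp : s.pre f = s.post f := hDpre f hfD
    by_cases hxv : x f ≤ v
    · -- x already satisfies the test: keep cost, branch (i)
      refine ⟨⟨Function.update s.pre f (s.pre f ∩ Set.Iic v),
              Function.update s.post f (s.post f ∩ Set.Iic v), s.cost⟩,
        Set.mem_biUnion hsS ?_, ?_, ?_, D, F, hDF, hF, hnF, hFb, ?_, ?_, ?_, hcost⟩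
      · apply Set.mem_union_left
        rw [if_pos hcond, if_pos hpp]
        rfl
      · intro i; dsimp only
        by_cases hi : i = f
        · rw [hi, Function.update_self]; exact ⟨hxpre f, hxv⟩
        · rw [Function.update_of_ne hi]; exact hxpre i
      · intro i; dsimp only
        by_cases hi : i = f
        · rw [hi, Function.update_self]; exact ⟨hzpost f, hzf⟩
        · rw [Function.update_of_ne hi]; exact hzpost i
      · intro g hg
        show Function.update s.pre f _ g = Function.update s.post f _ g
        by_cases hgf : g = f
        · rw [hgf, Function.update_self, Function.update_self, hpp]
        · rw [Function.update_of_ne hgf, Function.update_of_ne hgf]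
          exact hDpre g hg
      · intro g hg
        have hgf : g ≠ f := fun he => hfD (he ▸ hg)
        rw [Function.update_of_ne hgf]; exact hDB g hg
      · intro g
        show Function.update s.post f _ g ⊆ Function.update B f _ g
        by_cases hgf : g = f
        · rw [hgf, Function.update_self, Function.update_self]
          exact fun u hu => ⟨hpostB f hu.1, hu.2⟩
        · rw [Function.update_of_ne hgf, Function.update_of_ne hgf]
          exact hpostB g
    · -- x f > v : the attacker must pay for feature f, branch (ii)
      push_neg at hxv
      have hfF : f ∈ F := by
        by_contra hfF
        have := hnF f hfF
        linarith
      obtain ⟨δ, hδ, hzfx⟩ := hF f hfF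
      have hδneg : δ < 0 := by linarith
      have hδl : δl f < 0 := lt_of_le_of_lt hδ.1 hδneg
      have hxmem : x f ∈ Set.Ioc v (v - δl f) := ⟨hxv, by linarith [hδ.1]⟩
      have hbud : s.cost + c f ≤ b := by
        have hsub : insert f D ⊆ F := Finset.insert_subset hfF hDF
        have h2 := Finset.sum_le_sum_of_subset (f := c) hsub
        rw [Finset.sum_insert hfD] at h2
        omega
      have hcond2 : s.pre f = s.post f ∧ δl f < 0 ∧
          s.pre f ∩ Set.Ioc v (v - δl f) ≠ ∅ ∧ s.cost + c f ≤ b :=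
        ⟨hpp, hδl, Set.Nonempty.ne_empty ⟨x f, hxpre f, hxmem⟩, hbud⟩
      refine ⟨⟨Function.update s.pre f (s.pre f ∩ Set.Ioc v (v - δl f)),
              Function.update s.post f (s.post f ∩ Set.Ioc (v + δl f) v), s.cost + c f⟩,
        Set.mem_biUnion hsS ?_, ?_, ?_, insert f D, F,
        Finset.insert_subset hfF hDF, hF, hnF, hFb, ?_, ?_, ?_, ?_⟩
      · apply Set.mem_union_right
        rw [if_pos hcond2]
        rfl
      · intro i; dsimp only
        by_cases hi : i = f
        · rw [hi, Function.update_self]; exact ⟨hxpre f, hxmem⟩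
        · rw [Function.update_of_ne hi]; exact hxpre i
      · intro i; dsimp only
        by_cases hi : i = f
        · rw [hi, Function.update_self]
          exact ⟨hzpost f, ⟨by linarith [hδ.1], hzf⟩⟩
        · rw [Function.update_of_ne hi]; exact hzpost i
      · intro g hg
        simp only [Finset.mem_insert, not_or] at hg
        show Function.update s.pre f _ g = Function.update s.post f _ g
        rw [Function.update_of_ne hg.1, Function.update_of_ne hg.1]
        exact hDpre g hg.2
      · intro g hg
        rcases Finset.mem_insert.mp hg with hgf | hgD
        · rw [hgf, Function.update_self]
          exact fun hx => absurd hx.2 (not_le.mpr hxv)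
        · have hgf : g ≠ f := fun he => hfD (he ▸ hgD)
          rw [Function.update_of_ne hgf]; exact hDB g hgD
      · intro g
        show Function.update s.post f _ g ⊆ Function.update B f _ g
        by_cases hgf : g = f
        · rw [hgf, Function.update_self, Function.update_self]
          exact fun u hu => ⟨hpostB f hu.1, hu.2.2⟩
        · rw [Function.update_of_ne hgf, Function.update_of_ne hgf]
          exact hpostB g
      · show s.cost + c f = ∑ g ∈ insert f D, c g
        rw [Finset.sum_insert hfD, hcost]
        omega

private lemma step_right (c : Fin d → ℕ) (δl δr : Fin d → ℝ) (b : ℕ)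
    (B : Fin d → Set ℝ) (S : Set (SymAtk d)) (f : Fin d) (v : ℝ)
    (h : GoodB c δl δr b B S) :
    GoodB c δl δr b (Function.update B f (B f ∩ Set.Ioi v))
      (⋃ s ∈ S, RefineRight c δl δr b s f v) := by
  intro x z hz hzB'
  rw [mem_update_box_iff] at hzB'
  obtain ⟨hzB, hzf⟩ := hzB'
  obtain ⟨s, hsS, hxpre, hzpost, D, F, hDF, hF, hnF, hFb, hDpre, hDB, hpostB, hcost⟩ :=
    h x z hz hzB
  have hzfv : v < z f := hzf
  have hcond : s.post f ∩ Set.Ioi v ≠ ∅ :=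
    Set.Nonempty.ne_empty ⟨z f, hzpost f, hzf⟩
  by_cases hfD : f ∈ D
  · have hne : s.pre f ≠ s.post f := fun he => hDB f hfD (hpostB f (he ▸ hxpre f))
    obtain ⟨δ, hδ, hzfx⟩ := hF f (hDF hfD)
    have hxf : x f ∈ Set.Ioi (v - max 0 (δr f)) := by
      have h1 : δ ≤ max 0 (δr f) := le_trans hδ.2 (le_max_right _ _)
      simp only [Set.mem_Ioi]
      linarith
    refine ⟨⟨Function.update s.pre f (s.pre f ∩ Set.Ioi (v - max 0 (δr f))),
            Function.update s.post f (s.post f ∩ Set.Ioi v), s.cost⟩,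
      Set.mem_biUnion hsS ?_, ?_, ?_, D, F, hDF, hF, hnF, hFb, ?_, ?_, ?_, hcost⟩
    · apply Set.mem_union_left
      rw [if_pos hcond, if_neg hne]
      rfl
    · intro i; dsimp only
      by_cases hi : i = f
      · rw [hi, Function.update_self]; exact ⟨hxpre f, hxf⟩
      · rw [Function.update_of_ne hi]; exact hxpre i
    · intro i; dsimp only
      by_cases hi : i = f
      · rw [hi, Function.update_self]; exact ⟨hzpost f, hzf⟩
      · rw [Function.update_of_ne hi]; exact hzpost i
    · intro g hg
      have hgf : g ≠ f := fun he => hg (he ▸ hfD)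
      show Function.update s.pre f _ g = Function.update s.post f _ g
      rw [Function.update_of_ne hgf, Function.update_of_ne hgf]
      exact hDpre g hg
    · intro g hg
      by_cases hgf : g = f
      · rw [hgf, Function.update_self]
        exact fun hx => hDB f hfD hx.1
      · rw [Function.update_of_ne hgf]; exact hDB g hg
    · intro g
      show Function.update s.post f _ g ⊆ Function.update B f _ g
      by_cases hgf : g = f
      · rw [hgf, Function.update_self, Function.update_self]
        exact fun u hu => ⟨hpostB f hu.1, hu.2⟩
      · rw [Function.update_of_ne hgf, Function.update_of_ne hgf]
        exact hpostB g
  · have hpp : s.pre f = s.post f := hDpre f hfD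
    by_cases hxv : v < x f
    · refine ⟨⟨Function.update s.pre f (s.pre f ∩ Set.Ioi v),
              Function.update s.post f (s.post f ∩ Set.Ioi v), s.cost⟩,
        Set.mem_biUnion hsS ?_, ?_, ?_, D, F, hDF, hF, hnF, hFb, ?_, ?_, ?_, hcost⟩
      · apply Set.mem_union_left
        rw [if_pos hcond, if_pos hpp]
        rfl
      · intro i; dsimp only
        by_cases hi : i = f
        · rw [hi, Function.update_self]; exact ⟨hxpre f, hxv⟩
        · rw [Function.update_of_ne hi]; exact hxpre i
      · intro i; dsimp only
        by_cases hi : i = f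
        · rw [hi, Function.update_self]; exact ⟨hzpost f, hzf⟩
        · rw [Function.update_of_ne hi]; exact hzpost i
      · intro g hg
        show Function.update s.pre f _ g = Function.update s.post f _ g
        by_cases hgf : g = f
        · rw [hgf, Function.update_self, Function.update_self, hpp]
        · rw [Function.update_of_ne hgf, Function.update_of_ne hgf]
          exact hDpre g hg
      · intro g hg
        have hgf : g ≠ f := fun he => hfD (he ▸ hg)
        rw [Function.update_of_ne hgf]; exact hDB g hg
      · intro g
        show Function.update s.post f _ g ⊆ Function.update B f _ g
        by_cases hgf : g = f
        · rw [hgf, Function.update_self, Function.update_self]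
          exact fun u hu => ⟨hpostB f hu.1, hu.2⟩
        · rw [Function.update_of_ne hgf, Function.update_of_ne hgf]
          exact hpostB g
    · push_neg at hxv
      have hfF : f ∈ F := by
        by_contra hfF
        have := hnF f hfF
        linarith
      obtain ⟨δ, hδ, hzfx⟩ := hF f hfF
      have hδpos : 0 < δ := by linarith
      have hδr : 0 < δr f := lt_of_lt_of_le hδpos hδ.2
      have hxmem : x f ∈ Set.Ioc (v - δr f) v := ⟨by linarith [hδ.2], hxv⟩
      have hbud : s.cost + c f ≤ b := by
        have hsub : insert f D ⊆ F := Finset.insert_subset hfF hDF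
        have h2 := Finset.sum_le_sum_of_subset (f := c) hsub
        rw [Finset.sum_insert hfD] at h2
        omega
      have hcond2 : s.pre f = s.post f ∧ δr f > 0 ∧
          s.pre f ∩ Set.Ioc (v - δr f) v ≠ ∅ ∧ s.cost + c f ≤ b :=
        ⟨hpp, hδr, Set.Nonempty.ne_empty ⟨x f, hxpre f, hxmem⟩, hbud⟩
      refine ⟨⟨Function.update s.pre f (s.pre f ∩ Set.Ioc (v - δr f) v),
              Function.update s.post f (s.post f ∩ Set.Ioc v (v + δr f)), s.cost + c f⟩,
        Set.mem_biUnion hsS ?_, ?_, ?_, insert f D, F,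
        Finset.insert_subset hfF hDF, hF, hnF, hFb, ?_, ?_, ?_, ?_⟩
      · apply Set.mem_union_right
        rw [if_pos hcond2]
        rfl
      · intro i; dsimp only
        by_cases hi : i = f
        · rw [hi, Function.update_self]; exact ⟨hxpre f, hxmem⟩
        · rw [Function.update_of_ne hi]; exact hxpre i
      · intro i; dsimp only
        by_cases hi : i = f
        · rw [hi, Function.update_self]
          exact ⟨hzpost f, ⟨hzf, by linarith [hδ.2]⟩⟩
        · rw [Function.update_of_ne hi]; exact hzpost i
      · intro g hg
        simp only [Finset.mem_insert, not_or] at hg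
        show Function.update s.pre f _ g = Function.update s.post f _ g
        rw [Function.update_of_ne hg.1, Function.update_of_ne hg.1]
        exact hDpre g hg.2
      · intro g hg
        rcases Finset.mem_insert.mp hg with hgf | hgD
        · rw [hgf, Function.update_self]
          exact fun hx => absurd hx.2 (not_lt.mpr hxv)
        · have hgf : g ≠ f := fun he => hfD (he ▸ hgD)
          rw [Function.update_of_ne hgf]; exact hDB g hgD
      · intro g
        show Function.update s.post f _ g ⊆ Function.update B f _ g
        by_cases hgf : g = f
        · rw [hgf, Function.update_self, Function.update_self]
          exact fun u hu => ⟨hpostB f hu.1, hu.2.1⟩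
        · rw [Function.update_of_ne hgf, Function.update_of_ne hgf]
          exact hpostB g
      · show s.cost + c f = ∑ g ∈ insert f D, c g
        rw [Finset.sum_insert hfD, hcost]
        omega

private lemma reachesD_nil (t : DTree d Y) (z : Fin d → ℝ) : ReachesD t z [] := by
  cases t <;> exact trivial

private lemma annotate_main (c : Fin d → ℕ) (δl δr : Fin d → ℝ) (b : ℕ) :
    ∀ (t : DTree d Y) (B : Fin d → Set ℝ) (S : Set (SymAtk d)),
      GoodB c δl δr b B S →
      ∀ (p : List Bool) (S' : Set (SymAtk d)),
        (Annotate c δl δr b t S).symAt p = some S' →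
        ∃ B'' : Fin d → Set ℝ,
          (∀ w : Fin d → ℝ,
            (∀ g, w g ∈ B'' g) ↔ ((∀ g, w g ∈ B g) ∧ ReachesD t w p)) ∧
          GoodB c δl δr b B'' S' := by
  intro t
  induction t with
  | leaf y =>
    intro B S hG p S' hp
    cases p with
    | nil =>
      simp only [Annotate, ATree.symAt, Option.some.injEq] at hp
      subst hp
      exact ⟨B, fun w => by simp [ReachesD], hG⟩
    | cons dir p' => simp [Annotate, ATree.symAt] at hp
  | node f v l r ihl ihr =>
    intro B S hG p S' hp
    cases p with
    | nil =>
      simp only [Annotate, ATree.symAt, Option.some.injEq] at hp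
      subst hp
      exact ⟨B, fun w => by simp [ReachesD], hG⟩
    | cons dir p' =>
      cases dir with
      | false =>
        simp only [Annotate, ATree.symAt] at hp
        obtain ⟨B'', hiff, hG'⟩ := ihl _ _ (step_left c δl δr b B S f v hG) p' S' hp
        refine ⟨B'', fun w => ?_, hG'⟩
        rw [hiff w, mem_update_box_iff]
        simp only [ReachesD, Set.mem_Iic]
        tauto
      | true =>
        simp only [Annotate, ATree.symAt] at hp
        obtain ⟨B'', hiff, hG'⟩ := ihr _ _ (step_right c δl δr b B S f v hG) p' S' hp
        refine ⟨B'', fun w => ?_, hG'⟩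
        rw [hiff w, mem_update_box_iff]
        simp only [ReachesD, Set.mem_Ioi]
        tauto

end Soundness

/-- Soundness of tree annotation (Lemma 1): if the root of `t` is well-annotated by `S`
(a set of symbolic attacks, i.e., `s.pre = s.post` whenever `s.cost = 0`), then
`Annotate t S` returns a well-annotated decision tree: every node of the resulting tree
is well-annotated by the set of symbolic attacks stored in its `sym` attribute. -/
theorem annotate_sound {d : ℕ} {Y : Type*} [Fintype Y]
    (c : Fin d → ℕ) (δl δr : Fin d → ℝ) (b : ℕ)
    (t : DTree d Y) (S : Set (SymAtk d))
    (hS : ∀ s ∈ S, s.cost = 0 → s.pre = s.post)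
    (hroot : NodeWellAnnotated c (fun f => Set.Icc (δl f) (δr f)) b t [] S) :
    ∀ (p : List Bool) (S' : Set (SymAtk d)),
      (Annotate c δl δr b t S).symAt p = some S' →
      NodeWellAnnotated c (fun f => Set.Icc (δl f) (δr f)) b t p S' := by
  have hgood : GoodB c δl δr b (fun _ => Set.univ) S := by
    intro x z hz _
    obtain ⟨s, hsS, hxpre, hzpost, hc⟩ := hroot x z hz (reachesD_nil t z)
    have hmc : minCost c (fun f => Set.Icc (δl f) (δr f)) t x [] = 0 := by
      have h0 : (0 : ℕ) ∈ {k : ℕ |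
          ∃ w ∈ Adv c (fun f => Set.Icc (δl f) (δr f)) k x, ReachesD t w []} :=
        ⟨x, ⟨∅, fun g hg => absurd hg (Finset.notMem_empty g), fun g _ => rfl,
          by simp⟩, reachesD_nil t x⟩
      exact Nat.le_zero.mp (Nat.sInf_le h0)
    have hpp : s.pre = s.post := hS s hsS (hc.trans hmc)
    obtain ⟨F, hF, hnF, hFb⟩ := hz
    exact ⟨s, hsS, hxpre, hzpost, ∅, F, Finset.empty_subset F, hF, hnF, hFb,
      fun g _ => congrFun hpp g, fun g hg => absurd hg (Finset.notMem_empty g),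
      fun g => Set.subset_univ _, by rw [Finset.sum_empty, hc, hmc]⟩
  intro p S' hp
  obtain ⟨B'', hiff, hG⟩ := annotate_main c δl δr b t _ S hgood p S' hp
  intro x z hz hreach
  have hzB'' : ∀ g, z g ∈ B'' g := (hiff z).mpr ⟨fun g => trivial, hreach⟩
  obtain ⟨s, hsS', hxpre, hzpost, D, F, hDF, hF, hnF, hFb, hDpre, hDB, hpostB, hcost⟩ :=
    hG x z hz hzB''
  refine ⟨s, hsS', hxpre, hzpost, ?_⟩
  have hmem : s.cost ∈ {k : ℕ |
      ∃ w ∈ Adv c (fun f => Set.Icc (δl f) (δr f)) k x, ReachesD t w p} := by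
    refine ⟨fun g => if g ∈ D then z g else x g, ⟨D, ?_, ?_, ?_⟩, ?_⟩
    · intro g hg
      obtain ⟨δ, hδ, he⟩ := hF g (hDF hg)
      exact ⟨δ, hδ, by dsimp only; rw [if_pos hg]; exact he⟩
    · intro g hg
      dsimp only
      rw [if_neg hg]
    · exact hcost.ge
    · have hwB : ∀ g, (if g ∈ D then z g else x g) ∈ B'' g := by
        intro g
        by_cases hg : g ∈ D
        · rw [if_pos hg]; exact hpostB g (hzpost g)
        · rw [if_neg hg]; exact hpostB g (hDpre g hg ▸ hxpre g)
      exact ((hiff _).mp hwB).2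
  have hlb : ∀ k ∈ {k : ℕ |
      ∃ w ∈ Adv c (fun f => Set.Icc (δl f) (δr f)) k x, ReachesD t w p}, s.cost ≤ k := by
    rintro k ⟨w, ⟨F', hF', hnF', hF'b⟩, hwreach⟩
    have hwB'' : ∀ g, w g ∈ B'' g := (hiff w).mpr ⟨fun g => trivial, hwreach⟩
    have hsub : D ⊆ F' := by
      intro g hg
      by_contra hgF'
      exact hDB g hg (hnF' g hgF' ▸ hwB'' g)
    calc s.cost = ∑ g ∈ D, c g := hcost
      _ ≤ ∑ g ∈ F', c g := Finset.sum_le_sum_of_subset hsub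
      _ ≤ k := hF'b
  rw [minCost]
  exact (le_antisymm (Nat.sInf_le hmem) (hlb _ (Nat.sInf_mem ⟨_, hmem⟩))).symm
end

section
/- Soundness of Tree Ensemble Analysis (Theorem 2): let T = {t_1,…,t_n} be an ensemble of decision trees with ensemble prediction T : ℝ^d → Y and hyper-rectangle prediction T(H) ⊆ Y. Assume: (H1) soundness of T(H): for every hyper-rectangle H, {y ∈ Y : ∃ x ∈ H, T(x) = y} ⊆ T(H); (H2) soundness of Split: for every symbolic attack s, if there exist x ∈ ℝ^d and z ∈ A(x) with x ∈ s.pre and z ∈ s.post, then there exists s' ∈ Split(s) with x ∈ s'.pre and z ∈ s'.post; (H3) each per-tree analysis Analyze(t_i) returns a set U_i of symbolic attacks such that for every x ∈ ℝ^d and z ∈ A(x) with t_i(z) ≠ t_i(x), there exists s ∈ U_i with x ∈ s.pre and z ∈ s.post; and (H4) T(x) is determined by the tuple of tree predictions (t_1(x),…,t_n(x)). Then, for any number of iterations of the ensemble analysis loop (i.e., under an arbitrary stopping condition), the call Analyze(T) returns a set of symbolic attacks U such that for every instance x ∈ ℝ^d and every adversarial manipulation z ∈ A(x) with T(z) ≠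 T(x), there exists s ∈ U with x ∈ s.pre and z ∈ s.post. -/
open Classical

/-- One processing step of the ensemble analysis loop on the state `(C, E)`: a candidate
`s ∈ C` is picked; if `T(s.pre) = T(s.post) = {y}` then `s` is removed from `C`;
otherwise, if `T(s.pre) ∩ T(s.post) ≠ ∅` then `s` is replaced in `C` by `Split s`;
otherwise `s` is moved from `C` to `E`. -/
def Step {d : ℕ} {Y : Type*} (TBox : (Fin d → Set ℝ) → Set Y)
    (Split : SymAtk d → Set (SymAtk d)) :
    Set (SymAtk d) × Set (SymAtk d) → Set (SymAtk d) × Set (SymAtk d) → Prop :=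
  fun CE CE' => ∃ s ∈ CE.1,
    ((∃ y : Y, TBox s.pre = {y} ∧ TBox s.post = {y}) ∧
        CE' = (CE.1 \ {s}, CE.2)) ∨
    (¬(∃ y : Y, TBox s.pre = {y} ∧ TBox s.post = {y}) ∧
        (TBox s.pre ∩ TBox s.post).Nonempty ∧
        CE' = ((CE.1 \ {s}) ∪ Split s, CE.2)) ∨
    (¬(∃ y : Y, TBox s.pre = {y} ∧ TBox s.post = {y}) ∧
        TBox s.pre ∩ TBox s.post = ∅ ∧
        CE' = (CE.1 \ {s}, CE.2 ∪ {s}))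

/-- Soundness of tree ensemble analysis (Theorem 2): starting from the union of sound
per-tree analyses and running the ensemble analysis loop for any number of iterations
(i.e., under an arbitrary stopping condition), the returned set `C ∪ E` covers all
successful evasion attacks: for every `x` and `z ∈ A(x)` with `T(z) ≠ T(x)` there is
`s ∈ C ∪ E` with `x ∈ s.pre` and `z ∈ s.post`. -/
theorem ensemble_analysis_sound {d n : ℕ} {Y : Type*} [Fintype Y]
    (A : (Fin d → ℝ) → Set (Fin d → ℝ))
    (t : Fin n → DTree d Y) (T : (Fin d → ℝ) → Y)
    (TBox : (Fin d → Set ℝ) → Set Y) (Split : SymAtk d → Set (SymAtk d))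
    (U : Fin n → Set (SymAtk d))
    -- (H1) soundness of the hyper-rectangle prediction T(H)
    (H1 : ∀ H : Fin d → Set ℝ, {y : Y | ∃ x ∈ box H, T x = y} ⊆ TBox H)
    -- (H2) soundness of the splitting procedure
    (H2 : ∀ (s : SymAtk d) (x : Fin d → ℝ), ∀ z ∈ A x,
      x ∈ box s.pre → z ∈ box s.post →
      ∃ s' ∈ Split s, x ∈ box s'.pre ∧ z ∈ box s'.post)
    -- (H3) soundness of the per-tree analyses
    (H3 : ∀ (i : Fin n) (x : Fin d → ℝ), ∀ z ∈ A x,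
      (t i).eval z ≠ (t i).eval x →
      ∃ s ∈ U i, x ∈ box s.pre ∧ z ∈ box s.post)
    -- (H4) the ensemble prediction is determined by the tuple of tree predictions
    (H4 : ∀ x z : Fin d → ℝ, (∀ i, (t i).eval x = (t i).eval z) → T x = T z)
    (C E : Set (SymAtk d))
    (hreach : Relation.ReflTransGen (Step TBox Split) (⋃ i, U i, ∅) (C, E)) :
    ∀ (x : Fin d → ℝ), ∀ z ∈ A x, T z ≠ T x →
      ∃ s ∈ C ∪ E, x ∈ box s.pre ∧ z ∈ box s.post := by
  intro x z hz hne
  suffices h : ∀ CE : Set (SymAtk d) × Set (SymAtk d),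
      Relation.ReflTransGen (Step TBox Split) (⋃ i, U i, ∅) CE →
      ∃ s ∈ CE.1 ∪ CE.2, x ∈ box s.pre ∧ z ∈ box s.post from h (C, E) hreach
  intro CE h
  induction h with
  | refl =>
      have hex : ∃ i, (t i).eval z ≠ (t i).eval x := by
        by_contra hc
        push_neg at hc
        exact hne (H4 z x hc)
      obtain ⟨i, hi⟩ := hex
      obtain ⟨s, hs, hx, hz'⟩ := H3 i x z hz hi
      exact ⟨s, Or.inl (Set.mem_iUnion.mpr ⟨i, hs⟩), hx, hz'⟩
  | tail h' hstep ih =>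
      obtain ⟨s, hs, hx, hz'⟩ := ih
      obtain ⟨s₀, hs₀, hcase⟩ := hstep
      rcases hcase with ⟨⟨y, hpre, hpost⟩, hc⟩ | ⟨_, _, hc⟩ | ⟨_, _, hc⟩
      · -- safe case: s₀ removed
        rcases hs with hs | hs
        · by_cases hss : s = s₀
          · exfalso
            subst hss
            have hTx : T x ∈ TBox s.pre := H1 _ ⟨x, hx, rfl⟩
            have hTz : T z ∈ TBox s.post := H1 _ ⟨z, hz', rfl⟩
            rw [hpre] at hTx
            rw [hpost] at hTz
            exact hne (hTz.trans hTx.symm)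
          · exact ⟨s, by rw [hc]; exact Or.inl ⟨hs, hss⟩, hx, hz'⟩
        · exact ⟨s, by rw [hc]; exact Or.inr hs, hx, hz'⟩
      · -- split case
        rcases hs with hs | hs
        · by_cases hss : s = s₀
          · subst hss
            obtain ⟨s', hs', hx', hz''⟩ := H2 s x z hz hx hz'
            exact ⟨s', by rw [hc]; exact Or.inl (Or.inr hs'), hx', hz''⟩
          · exact ⟨s, by rw [hc]; exact Or.inl (Or.inl ⟨hs, hss⟩), hx, hz'⟩
        · exact ⟨s, by rw [hc]; exact Or.inr hs, hx, hz'⟩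
      · -- move to E case
        rcases hs with hs | hs
        · by_cases hss : s = s₀
          · exact ⟨s, by rw [hc]; exact Or.inr (Or.inr hss), hx, hz'⟩
          · exact ⟨s, by rw [hc]; exact Or.inl ⟨hs, hss⟩, hx, hz'⟩
        · exact ⟨s, by rw [hc]; exact Or.inr (Or.inl hs), hx, hz'⟩
end

section
/- Soundness of the implemented splitting procedure: assume 0 ∈ I^atk_g for every feature g. Let s be a symbolic attack, let f be a feature index and v ∈ ℝ a threshold with I^atk_f = [δ_l, δ_r], and let Split(s) be the set of symbolic attacks obtained by partitioning the f-th interval of s.pre at the thresholds v + δ_l, v, v + δ_r into at most four consecutive subintervals, where each resulting symbolic attack s' has s'.pre equal to s.pre with its f-th component replaced by one such subinterval, s'.post = s.post ∩ (s'.pre + ⟨I^atk_1,…,I^atk_d⟩), and s'.cost = s.cost. Then Split is sound: for every x ∈ ℝ^d and every z ∈ A(x), if x ∈ s.pre and z ∈ s.post, then there exists s' ∈ Split(s) with x ∈ s'.pre and z ∈ s'.post. -/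
open Pointwise

/-- The implemented splitting procedure: the `f`-th interval of `s.pre` is partitioned at
the thresholds `v + δl f`, `v`, `v + δr f` into at most four consecutive subintervals;
each resulting symbolic attack `s'` has `s'.pre` equal to `s.pre` with its `f`-th
component replaced by one such subinterval, post-image
`s'.post = s.post ∩ (s'.pre + ⟨Iatk 1,…,Iatk d⟩)` (componentwise interval sums) and the
same cost as `s`. -/
def SplitImpl {d : ℕ} (δl δr : Fin d → ℝ) (s : SymAtk d) (f : Fin d) (v : ℝ) :
    Set (SymAtk d) :=
  {s' | ∃ J ∈ ({s.pre f ∩ Set.Iic (v + δl f),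
                s.pre f ∩ Set.Ioc (v + δl f) v,
                s.pre f ∩ Set.Ioc v (v + δr f),
                s.pre f ∩ Set.Ioi (v + δr f)} : Set (Set ℝ)),
    s'.pre = Function.update s.pre f J ∧
    (∀ i, s'.post i = s.post i ∩ (s'.pre i + Set.Icc (δl i) (δr i))) ∧
    s'.cost = s.cost}

/-- Soundness of the implemented splitting procedure: assuming `0 ∈ Iatk g = [δl g, δr g]`
for every feature `g`, for every `x` and every `z ∈ A(x)`, if `x ∈ s.pre` and
`z ∈ s.post` then some `s' ∈ Split(s)` satisfies `x ∈ s'.pre` and `z ∈ s'.post`. -/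
theorem splitImpl_sound {d : ℕ} (c : Fin d → ℕ) (δl δr : Fin d → ℝ) (b : ℕ)
    (h0 : ∀ g, (0 : ℝ) ∈ Set.Icc (δl g) (δr g))
    (s : SymAtk d) (f : Fin d) (v : ℝ) :
    ∀ (x : Fin d → ℝ), ∀ z ∈ Adv c (fun g => Set.Icc (δl g) (δr g)) b x,
      x ∈ box s.pre → z ∈ box s.post →
      ∃ s' ∈ SplitImpl δl δr s f v, x ∈ box s'.pre ∧ z ∈ box s'.post := by

  intro x z hz hx hz'
  obtain ⟨F, hF, hnF, -⟩ := hz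
  have hxf := hx f
  have hJex : ∃ J ∈ ({s.pre f ∩ Set.Iic (v + δl f),
                s.pre f ∩ Set.Ioc (v + δl f) v,
                s.pre f ∩ Set.Ioc v (v + δr f),
                s.pre f ∩ Set.Ioi (v + δr f)} : Set (Set ℝ)), x f ∈ J := by
    rcases le_or_gt (x f) (v + δl f) with h1 | h1
    · exact ⟨s.pre f ∩ Set.Iic (v + δl f), by simp, hxf, h1⟩
    rcases le_or_gt (x f) v with h2 | h2
    · exact ⟨s.pre f ∩ Set.Ioc (v + δl f) v, by simp, hxf, h1, h2⟩
    rcases le_or_gt (x f) (v + δr f) with h3 | h3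
    · exact ⟨s.pre f ∩ Set.Ioc v (v + δr f), by simp, hxf, h2, h3⟩
    · exact ⟨s.pre f ∩ Set.Ioi (v + δr f), by simp, hxf, h3⟩
  obtain ⟨J, hJ, hxJ⟩ := hJex
  have hxpre : ∀ i, x i ∈ Function.update s.pre f J i := by
    intro i
    by_cases h : i = f
    · subst h; simpa using hxJ
    · simpa [Function.update_of_ne h] using hx i
  refine ⟨⟨Function.update s.pre f J,
      fun i => s.post i ∩ (Function.update s.pre f J i + Set.Icc (δl i) (δr i)),
      s.cost⟩, ⟨J, hJ, rfl, fun i => rfl, rfl⟩, hxpre, ?_⟩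
  intro i
  refine ⟨hz' i, ?_⟩
  by_cases hiF : i ∈ F
  · obtain ⟨δ, hδ, heq⟩ := hF i hiF
    rw [heq]
    exact Set.add_mem_add (hxpre i) hδ
  · rw [hnF i hiF]
    simpa using Set.add_mem_add (hxpre i) (h0 i)
end
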